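/- Let z ∈ ℂ with z ∉ {0, −α², −β²}, and let y ∈ ℂ satisfy y² = z(z+α²)(z+β²) (so y ≠ 0). Then |(α+β)z + y| = |(α+β)z − y| holds if and only if z is real and z ∈ (−∞, −α²) ∪ (−β², 0). Consequently: for every z ∈ ℂ ∖ ((−∞,−α²] ∪ [−β²,0]) with z ≠ 1, the two eigenvalues of W(z) have distinct absolute values; while for every real x ∈ (−∞,−α²) ∪ (−β², 0), both eigenvalues of W(x) have absolute value 1. -/

import Mathlib

open Complex

private lemma abs_add_eq_abs_sub_iff (a y : ℂ) :
    ‖a + y‖ = ‖a - y‖ ↔ (a * (starRingEnd ℂ) y).re = 0 := by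
  rw [← Real.sqrt_sq (norm_nonneg (a+y)), ← Real.sqrt_sq (norm_nonneg (a-y)),
    Real.sqrt_inj (by positivity) (by positivity), Complex.sq_norm, Complex.sq_norm]
  have h1 := Complex.normSq_add a y
  have h2 := Complex.normSq_sub a y
  constructor <;> intro h <;> linarith

private lemma prod_identity (α β : ℝ) (hαβ : α * β = 1) (z y : ℂ)
    (hy : y ^ 2 = z * (z + (α : ℂ) ^ 2) * (z + (β : ℂ) ^ 2)) :
    (((α:ℂ)+β)*z + y) * (((α:ℂ)+β)*z - y) = -(z*(z-1)^2) := by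
  have hab : (α:ℂ)*β = 1 := by exact_mod_cast congrArg (Complex.ofReal) hαβ
  linear_combination -hy + (2*z^2 - z*((α:ℂ)*β+1)) * hab

private lemma key_identity (α β : ℝ) (hαβ : α * β = 1) (z : ℂ) :
    z^2 * (starRingEnd ℂ) (z * (z + (α : ℂ) ^ 2) * (z + (β : ℂ) ^ 2)) =
      (Complex.normSq z : ℂ) * ((((α^2+β^2 : ℝ)):ℂ) * (Complex.normSq z : ℂ) + z
        + (Complex.normSq z : ℂ) * (starRingEnd ℂ) z) := by
  have hab : (α:ℂ)*β = 1 := by exact_mod_cast congrArg (Complex.ofReal) hαβ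
  have hzc : z * (starRingEnd ℂ) z = (Complex.normSq z : ℂ) := Complex.mul_conj z
  simp only [map_mul, map_add, Complex.conj_ofReal, map_pow]
  push_cast
  linear_combination ((starRingEnd ℂ) z*(z*(starRingEnd ℂ) z + (Complex.normSq z:ℂ))
      + ((α:ℂ)^2+(β:ℂ)^2)*(z*(starRingEnd ℂ) z + (Complex.normSq z:ℂ))
      + z*((α:ℂ)^2*(β:ℂ)^2)) * hzc + (z*(Complex.normSq z:ℂ)*((α:ℂ)*(β:ℂ)+1)) * hab

private lemma core (α β : ℝ) (hα : 1 < α) (hαβ : α * β = 1) (z y : ℂ)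
    (h0 : z ≠ 0) (ha : z ≠ -(α : ℂ) ^ 2) (hb : z ≠ -(β : ℂ) ^ 2)
    (hy : y ^ 2 = z * (z + (α : ℂ) ^ 2) * (z + (β : ℂ) ^ 2)) :
    (‖((α : ℂ) + (β : ℂ)) * z + y‖ =
        ‖((α : ℂ) + (β : ℂ)) * z - y‖ ↔
      ∃ x : ℝ, z = (x : ℂ) ∧ (x < -α ^ 2 ∨ (-β ^ 2 < x ∧ x < 0))) := by
  have hβ0 : 0 < β := by nlinarith
  have hβ1 : β < 1 := by nlinarith
  -- reduce to Re(z * conj y) = 0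
  have hs : (0:ℝ) < α + β := by linarith
  have hcrit : ‖((α : ℂ) + (β : ℂ)) * z + y‖ =
      ‖((α : ℂ) + (β : ℂ)) * z - y‖ ↔ (z * (starRingEnd ℂ) y).re = 0 := by
    rw [abs_add_eq_abs_sub_iff]
    have : ((α : ℂ) + (β : ℂ)) * z * (starRingEnd ℂ) y
        = ((α + β : ℝ) : ℂ) * (z * (starRingEnd ℂ) y) := by push_cast; ring
    rw [this, Complex.re_ofReal_mul]
    constructor
    · intro h; exact by nlinarith
    · intro h; rw [h, mul_zero]
  rw [hcrit]
  have hy0 : y ≠ 0 := by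
    intro h
    rw [h] at hy
    have : z * (z + (α : ℂ) ^ 2) * (z + (β : ℂ) ^ 2) ≠ 0 := by
      apply mul_ne_zero (mul_ne_zero h0 _) _
      · intro hc; apply ha; linear_combination hc
      · intro hc; apply hb; linear_combination hc
    exact this (by rw [← hy]; ring)
  constructor
  · -- forward
    intro hre
    set w := z * (starRingEnd ℂ) y with hw
    have hwne : w ≠ 0 := mul_ne_zero h0 (by simpa using hy0)
    have hwim : w.im ≠ 0 := by
      intro h; exact hwne (Complex.ext hre h)
    have hw2 : w ^ 2 = z ^ 2 * (starRingEnd ℂ) (y ^ 2) := by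
      rw [map_pow]; ring
    rw [hy, key_identity α β hαβ z] at hw2
    -- compute re and im of w^2
    have h2re : (w ^ 2).re = -(w.im ^ 2) := by
      rw [sq, Complex.mul_re, hre]; ring
    have h2im : (w ^ 2).im = 0 := by
      rw [sq, Complex.mul_im, hre]; ring
    set N := Complex.normSq z with hN
    have hNpos : 0 < N := Complex.normSq_pos.mpr h0
    set c : ℝ := α^2 + β^2 with hc
    have hgre : ((c : ℂ) * (N : ℂ) + z + (N : ℂ) * (starRingEnd ℂ) z).re
        = c * N + z.re + N * z.re := by
      simp [Complex.add_re, Complex.mul_re, Complex.conj_re, Complex.conj_im]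
    have hgim : ((c : ℂ) * (N : ℂ) + z + (N : ℂ) * (starRingEnd ℂ) z).im
        = z.im - N * z.im := by
      simp [Complex.add_im, Complex.mul_im, Complex.conj_re, Complex.conj_im]
      ring
    have hre2 : N * (c * N + z.re + N * z.re) = -(w.im ^ 2) := by
      rw [← h2re, hw2, Complex.re_ofReal_mul, hgre]
    have him2 : N * (z.im - N * z.im) = 0 := by
      rw [← h2im, hw2, Complex.im_ofReal_mul, hgim]
    have him3 : z.im - N * z.im = 0 := by
      rcases mul_eq_zero.mp him2 with h | h
      · exact absurd h (ne_of_gt hNpos)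
      · exact h
    have hreneg : c * N + z.re + N * z.re < 0 := by
      have hwim2 : 0 < w.im ^ 2 := by positivity
      nlinarith
    have hvzero : z.im = 0 := by
      by_contra hv
      have hNeq1 : N = 1 := by
        have : z.im * (1 - N) = 0 := by linarith [him3]
        rcases mul_eq_zero.mp this with h | h
        · exact absurd h hv
        · linarith
      have hNform : z.re ^ 2 + z.im ^ 2 = 1 := by
        rw [← hNeq1, hN, Complex.normSq_apply]; ring
      have hvsq : 0 < z.im ^ 2 := by positivity
      nlinarith [sq_nonneg (α - β), sq_nonneg (z.re + 1)]
    refine ⟨z.re, Complex.ext (by simp) (by simp [hvzero]), ?_⟩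
    set x := z.re with hxdef
    have hNx : N = x ^ 2 := by rw [hN, Complex.normSq_apply, hvzero]; ring
    rw [hNx] at hreneg
    clear_value x N w c
    clear * - hreneg hc hα hαβ hβ0 hβ1
    have hab2 : α^2*β^2 = 1 := by nlinarith
    have hcube : x * (x + α^2) * (x + β^2) < 0 := by
      have e : x*(x+α^2)*(x+β^2) = c*x^2 + x + x^2*x := by
        rw [hc]; linear_combination x * hab2
      linarith [hreneg, e.ge, e.le]
    by_contra hcon
    push_neg at hcon
    obtain ⟨h1, h2⟩ := hcon
    rcases le_or_gt x (-β^2) with h3 | h3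
    · have hb2 : 0 < β^2 := by positivity
      have f2 : 0 ≤ (x + α^2) * ((-x) * (-(x + β^2))) :=
        mul_nonneg (by linarith) (mul_nonneg (by nlinarith) (by linarith))
      nlinarith [f2]
    · have h4 : 0 ≤ x := h2 h3
      have f1 : 0 ≤ x * (x + α^2) := mul_nonneg h4 (by nlinarith)
      have f2 : 0 ≤ (x * (x + α^2)) * (x + β^2) := mul_nonneg f1 (by nlinarith)
      nlinarith
  · -- backward
    rintro ⟨x, rfl, hx⟩
    have hp : x * (x + α^2) * (x + β^2) < 0 := by
      rcases hx with h | ⟨h1, h2⟩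
      · have : x < 0 := by nlinarith
        have hfa : x + α^2 < 0 := by nlinarith
        have hfb : x + β^2 < 0 := by nlinarith
        nlinarith [mul_pos_of_neg_of_neg hfa hfb]
      · have hfa : 0 < x + α^2 := by nlinarith
        have hfb : 0 < x + β^2 := by nlinarith
        nlinarith [mul_pos hfa hfb]
    have hyp : y ^ 2 = ((x * (x + α^2) * (x + β^2) : ℝ) : ℂ) := by
      rw [hy]; push_cast; ring
    have hyre : y.re = 0 := by
      have him : (y ^ 2).im = 0 := by rw [hyp]; exact Complex.ofReal_im _
      have hre : (y ^ 2).re = x * (x + α^2) * (x + β^2) := by rw [hyp]; exact Complex.ofReal_re _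
      rw [sq, Complex.mul_im] at him
      rw [sq, Complex.mul_re] at hre
      rcases mul_eq_zero.mp (by linarith : y.re * (2 * y.im) = 0) with h | h
      · exact h
      · have : y.im = 0 := by linarith
        rw [this] at hre
        nlinarith
    rw [Complex.mul_re, Complex.ofReal_re, Complex.ofReal_im, Complex.conj_re,
      Complex.conj_im, hyre]
    ring

theorem eigenvalue_modulus_dichotomy (α β : ℝ) (hα : 1 < α) (hαβ : α * β = 1) :
    (∀ z y : ℂ, z ≠ 0 → z ≠ -(α : ℂ) ^ 2 → z ≠ -(β : ℂ) ^ 2 →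
      y ^ 2 = z * (z + (α : ℂ) ^ 2) * (z + (β : ℂ) ^ 2) →
      (‖((α : ℂ) + (β : ℂ)) * z + y‖ =
          ‖((α : ℂ) + (β : ℂ)) * z - y‖ ↔
        ∃ x : ℝ, z = (x : ℂ) ∧ (x < -α ^ 2 ∨ (-β ^ 2 < x ∧ x < 0)))) ∧
    (∀ z y : ℂ, z ≠ 1 →
      ¬(∃ x : ℝ, z = (x : ℂ) ∧ (x ≤ -α ^ 2 ∨ (-β ^ 2 ≤ x ∧ x ≤ 0))) →
      y ^ 2 = z * (z + (α : ℂ) ^ 2) * (z + (β : ℂ) ^ 2) →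
      ‖(((α : ℂ) + (β : ℂ)) * z + y) ^ 2 / (z * (z - 1) ^ 2)‖ ≠
        ‖(((α : ℂ) + (β : ℂ)) * z - y) ^ 2 / (z * (z - 1) ^ 2)‖) ∧
    (∀ x : ℝ, (x < -α ^ 2 ∨ (-β ^ 2 < x ∧ x < 0)) → ∀ y : ℂ,
      y ^ 2 = (x : ℂ) * ((x : ℂ) + (α : ℂ) ^ 2) * ((x : ℂ) + (β : ℂ) ^ 2) →
      ‖(((α : ℂ) + (β : ℂ)) * (x : ℂ) + y) ^ 2 /
          ((x : ℂ) * ((x : ℂ) - 1) ^ 2)‖ = 1 ∧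
      ‖(((α : ℂ) + (β : ℂ)) * (x : ℂ) - y) ^ 2 /
          ((x : ℂ) * ((x : ℂ) - 1) ^ 2)‖ = 1) := by
  have hβ0 : 0 < β := by nlinarith
  have hβ1 : β < 1 := by nlinarith
  refine ⟨fun z y h0 ha hb hy => core α β hα hαβ z y h0 ha hb hy, ?_, ?_⟩
  · -- part 2
    intro z y hz1 hnot hy heq
    have h0 : z ≠ 0 := by
      intro h; exact hnot ⟨0, by simp [h], Or.inr ⟨by nlinarith, le_refl 0⟩⟩
    have ha : z ≠ -(α : ℂ) ^ 2 := by
      intro h; exact hnot ⟨-α^2, by rw [h]; push_cast; ring, Or.inl le_rfl⟩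
    have hb : z ≠ -(β : ℂ) ^ 2 := by
      intro h; exact hnot ⟨-β^2, by rw [h]; push_cast; ring, Or.inr ⟨le_rfl, by nlinarith⟩⟩
    have hz1' : z - 1 ≠ 0 := sub_ne_zero.mpr hz1
    have hD : 0 < ‖z * (z - 1) ^ 2‖ :=
      norm_pos_iff.mpr (mul_ne_zero h0 (pow_ne_zero 2 hz1'))
    rw [norm_div, norm_div, norm_pow, norm_pow] at heq
    have hnum : ‖((α : ℂ) + (β : ℂ)) * z + y‖
        = ‖((α : ℂ) + (β : ℂ)) * z - y‖ := by
      have h2 : ‖((α : ℂ) + (β : ℂ)) * z + y‖ ^ 2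
          = ‖((α : ℂ) + (β : ℂ)) * z - y‖ ^ 2 := by
        rw [div_eq_div_iff (ne_of_gt hD) (ne_of_gt hD)] at heq
        exact mul_right_cancel₀ (ne_of_gt hD) heq
      nlinarith [norm_nonneg (((α : ℂ) + (β : ℂ)) * z + y),
        norm_nonneg (((α : ℂ) + (β : ℂ)) * z - y)]
    obtain ⟨x, hx1, hx2⟩ := (core α β hα hαβ z y h0 ha hb hy).mp hnum
    exact hnot ⟨x, hx1, hx2.imp le_of_lt (fun h => ⟨h.1.le, h.2.le⟩)⟩
  · -- part 3
    intro x hx y hy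
    have hxneg : x < 0 := by rcases hx with h | ⟨_, h⟩ <;> nlinarith
    have h0 : (x : ℂ) ≠ 0 := by exact_mod_cast ne_of_lt hxneg
    have ha : (x : ℂ) ≠ -(α : ℂ) ^ 2 := by
      intro h
      have h' : (x:ℂ) = ((-α^2 : ℝ):ℂ) := by rw [h]; push_cast; ring
      have : x = -α^2 := by exact_mod_cast h'
      rcases hx with h' | ⟨h', _⟩ <;> nlinarith
    have hb : (x : ℂ) ≠ -(β : ℂ) ^ 2 := by
      intro h
      have h' : (x:ℂ) = ((-β^2 : ℝ):ℂ) := by rw [h]; push_cast; ring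
      have : x = -β^2 := by exact_mod_cast h'
      rcases hx with h' | ⟨h', _⟩ <;> nlinarith
    have habs := (core α β hα hαβ (x : ℂ) y h0 ha hb hy).mpr ⟨x, rfl, hx⟩
    have hx1 : (x : ℂ) - 1 ≠ 0 := by
      intro h
      have : (x : ℂ) = 1 := by linear_combination h
      have : x = (1:ℝ) := by exact_mod_cast this
      linarith
    have hDne : (x : ℂ) * ((x : ℂ) - 1) ^ 2 ≠ 0 := mul_ne_zero h0 (pow_ne_zero 2 hx1)
    have hD : 0 < ‖(x : ℂ) * ((x : ℂ) - 1) ^ 2‖ := norm_pos_iff.mpr hDne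
    have hprod := prod_identity α β hαβ (x : ℂ) y hy
    have habsprod : ‖((α : ℂ) + (β : ℂ)) * (x:ℂ) + y‖
        * ‖((α : ℂ) + (β : ℂ)) * (x:ℂ) - y‖
        = ‖(x : ℂ) * ((x : ℂ) - 1) ^ 2‖ := by
      rw [← norm_mul, hprod, norm_neg]
    constructor
    · rw [norm_div, norm_pow]
      rw [div_eq_one_iff_eq (ne_of_gt hD)]
      rw [sq]
      rw [← habsprod, habs]
    · rw [norm_div, norm_pow]
      rw [div_eq_one_iff_eq (ne_of_gt hD)]
      rw [sq]
      rw [← habsprod, habs]
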